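/- Let M be a matroid on a finite ground set E. If |E| = 1 then t_M = 1. If |E| ≥ 2 and i ∈ E, then: t_M = (x+y)·t_{M∖i} if i is a loop of M; t_M = (x+y)·t_{M/i} if i is a coloop of M; and t_M = (x+w)·t_{M∖i} + (y+z)·t_{M/i} if i is neither a loop nor a coloop of M. -/

import Mathlib

open Matroid MvPolynomial

variable {α : Type*}

-- The rank of a finset `A` in a matroid `M`: the maximal size of an independent subset of `A`.
open scoped Classical in
noncomputable def matRank [Fintype α] (M : Matroid α) (A : Finset α) : ℕ :=
  (A.powerset.filter (fun I : Finset α => M.Indep (I : Set α))).sup Finset.card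

/-- The (finite) ground set of a matroid on a finite type, as a finset. -/
noncomputable def groundFinset [Fintype α] (M : Matroid α) : Finset α :=
  M.E.toFinite.toFinset

/-- `g_M(x,y,z,w) = ∑_{A ⊆ E} (x−z)^{r−rk A} (y+z)^{rk A} (y−w)^{|A|−rk A}
(x+w)^{(|E|−|A|)−(r−rk A)}`, with `x = X 0`, `y = X 1`, `z = X 2`, `w = X 3`;
equivalently `g_M = (y+z)^r (x+w)^{|E|−r} T_M((x+y)/(y+z), (x+y)/(x+w))`. -/
noncomputable def gPoly [Fintype α] (M : Matroid α) : MvPolynomial (Fin 4) ℤ :=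
  ∑ A ∈ (groundFinset M).powerset,
    (X 0 - X 2) ^ (matRank M (groundFinset M) - matRank M A) *
      (X 1 + X 2) ^ (matRank M A) *
      (X 1 - X 3) ^ (A.card - matRank M A) *
      (X 0 + X 3) ^ (((groundFinset M).card - A.card)
        - (matRank M (groundFinset M) - matRank M A))

/-- Deletion of a set `D` from the matroid `M`: the restriction of `M` to `M.E \ D`. -/
def mdelete (M : Matroid α) (D : Set α) : Matroid α := M ↾ (M.E \ D)

/-- Contraction of a set `C` in the matroid `M`, defined via duality:
`M / C = (M✶ \ C)✶`, a matroid on `M.E \ C`. -/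
def mcontract (M : Matroid α) (C : Set α) : Matroid α := (M✶ ↾ (M.E \ C))✶

/-- Substituting `x := 0` (the variable `X 0`) into a polynomial in `x, y, z, w`. -/
noncomputable def subX0 : MvPolynomial (Fin 4) ℤ →ₐ[ℤ] MvPolynomial (Fin 4) ℤ :=
  aeval fun j => if j = 0 then 0 else X j

/-- Substituting `y := 0` (the variable `X 1`) into a polynomial in `x, y, z, w`. -/
noncomputable def subY0 : MvPolynomial (Fin 4) ℤ →ₐ[ℤ] MvPolynomial (Fin 4) ℤ :=
  aeval fun j => if j = 1 then 0 else X j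


section DelCon

open scoped Classical
set_option linter.unusedSectionVars false

variable [Fintype α] {M : Matroid α} {A B J : Finset α} {i : α}

lemma coe_groundFinset (M : Matroid α) [Fintype α] : (↑(groundFinset M) : Set α) = M.E :=
  Set.Finite.coe_toFinset _

lemma le_matRank (hJA : J ⊆ A) (hJ : M.Indep ↑J) : J.card ≤ matRank M A := by
  classical
  unfold matRank
  exact Finset.le_sup (Finset.mem_filter.mpr ⟨Finset.mem_powerset.mpr hJA, hJ⟩)

lemma le_matRank' {S : Set α} (hSA : S ⊆ ↑A) (hS : M.Indep S) : S.ncard ≤ matRank M A := by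
  classical
  have hfin : S.Finite := Set.toFinite S
  have h1 : hfin.toFinset ⊆ A := by
    intro x hx
    exact Finset.mem_coe.mp (hSA (hfin.mem_toFinset.mp hx))
  have := le_matRank h1 (by rwa [hfin.coe_toFinset])
  rwa [Set.ncard_eq_toFinset_card S hfin]

lemma exists_matRank_basis (M : Matroid α) [Fintype α] (A : Finset α) :
    ∃ B : Finset α, B ⊆ A ∧ M.Indep ↑B ∧ B.card = matRank M A := by
  classical
  have hne : (A.powerset.filter (fun I : Finset α => M.Indep (I : Set α))).Nonempty :=
    ⟨∅, by simp⟩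
  obtain ⟨B, hB, hBc⟩ := Finset.exists_mem_eq_sup _ hne Finset.card
  rw [Finset.mem_filter, Finset.mem_powerset] at hB
  refine ⟨B, hB.1, hB.2, ?_⟩
  unfold matRank
  rw [hBc]

lemma matRank_le_card : matRank M A ≤ A.card := by
  obtain ⟨B, hBA, _, hBc⟩ := exists_matRank_basis M A
  rw [← hBc]
  exact Finset.card_le_card hBA

lemma matRank_mono (h : A ⊆ B) : matRank M A ≤ matRank M B := by
  obtain ⟨C, hCA, hCi, hCc⟩ := exists_matRank_basis M A
  rw [← hCc]
  exact le_matRank (hCA.trans h) hCi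

lemma exists_matRank_basis' (M : Matroid α) [Fintype α] (A : Finset α) (hA : ↑A ⊆ M.E) :
    ∃ B : Finset α, B ⊆ A ∧ M.IsBasis ↑B ↑A ∧ B.card = matRank M A := by
  classical
  obtain ⟨B, hBA, hBi, hBc⟩ := exists_matRank_basis M A
  refine ⟨B, hBA, ?_, hBc⟩
  rw [Matroid.isBasis_iff hA]
  refine ⟨hBi, by exact_mod_cast hBA, fun S hS hBS hSA => ?_⟩
  have hfin : S.Finite := Set.toFinite S
  have h1 : hfin.toFinset ⊆ A := by
    intro x hx; exact Finset.mem_coe.mp (hSA (hfin.mem_toFinset.mp hx))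
  have h2 : B ⊆ hfin.toFinset := by
    intro x hx
    exact hfin.mem_toFinset.mpr (hBS hx)
  have h3 : hfin.toFinset.card ≤ B.card := by
    rw [hBc]; exact le_matRank h1 (by rwa [hfin.coe_toFinset])
  have : B = hfin.toFinset := Finset.eq_of_subset_of_card_le h2 h3
  rw [this, hfin.coe_toFinset]

lemma matRank_eq_of_basis {S : Set α} (hA : ↑A ⊆ M.E) (hS : M.IsBasis S ↑A) :
    S.ncard = matRank M A := by
  obtain ⟨B, _, hBb, hBc⟩ := exists_matRank_basis' M A hA
  have := hS.encard_eq_encard hBb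
  have h2 : S.ncard = B.card := by
    rw [← Set.ncard_coe_finset B]
    exact congrArg ENat.toNat this
  rw [h2, hBc]

lemma base_ncard_eq_matRank {S : Set α} (hS : M.IsBase S) :
    S.ncard = matRank M (groundFinset M) := by
  refine matRank_eq_of_basis (by rw [coe_groundFinset]) ?_
  rw [coe_groundFinset]
  exact hS.isBasis_ground

lemma matRank_insert_le : matRank M (insert i A) ≤ matRank M A + 1 := by
  classical
  obtain ⟨B, hBA, hBi, hBc⟩ := exists_matRank_basis M (insert i A)
  have h1 : B.erase i ⊆ A := by
    intro x hx
    rcases Finset.mem_insert.mp (hBA (Finset.erase_subset i B hx)) with h | h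
    · exact absurd h (Finset.ne_of_mem_erase hx)
    · exact h
  have h2 : M.Indep ↑(B.erase i) :=
    hBi.subset (by exact_mod_cast Finset.erase_subset i B)
  have h3 := le_matRank h1 h2
  have h4 : B.card ≤ (B.erase i).card + 1 := by
    by_cases hiB : i ∈ B
    · rw [Finset.card_erase_of_mem hiB]; omega
    · rw [Finset.erase_eq_of_notMem hiB]; omega
  omega

lemma matRank_union_le (M : Matroid α) [Fintype α] (A C : Finset α) :
    matRank M (A ∪ C) ≤ matRank M A + C.card := by
  classical
  induction C using Finset.induction with
  | empty => simp
  | @insert a C ha ih =>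
      have h1 : A ∪ insert a C = insert a (A ∪ C) := by
        ext x; simp [or_comm, or_assoc, or_left_comm]
      rw [h1, Finset.card_insert_of_notMem ha]
      have := matRank_insert_le (M := M) (i := a) (A := A ∪ C)
      omega

lemma matRank_ground_le (h : A ⊆ B) :
    matRank M B + A.card ≤ matRank M A + B.card := by
  classical
  have h1 : B = A ∪ (B \ A) := by
    rw [Finset.union_sdiff_of_subset h]
  have h2 := matRank_union_le M A (B \ A)
  rw [← h1] at h2
  have h3 : (B \ A).card = B.card - A.card := Finset.card_sdiff_of_subset h
  have h4 : A.card ≤ B.card := Finset.card_le_card h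
  omega


lemma matRank_insert_loop (h : ¬ M.Indep {i}) (A : Finset α) :
    matRank M (insert i A) = matRank M A := by
  classical
  refine le_antisymm ?_ (matRank_mono (Finset.subset_insert i A))
  obtain ⟨B, hBA, hBi, hBc⟩ := exists_matRank_basis M (insert i A)
  have hiB : i ∉ B := by
    intro hiB
    exact h (hBi.subset (by simpa using hiB))
  have h1 : B ⊆ A := by
    intro x hx
    rcases Finset.mem_insert.mp (hBA hx) with h2 | h2
    · exact absurd (h2 ▸ hx) hiB
    · exact h2
  rw [← hBc]
  exact le_matRank h1 hBi

lemma matRank_singleton_nonloop (h : M.Indep {i}) : matRank M ({i} : Finset α) = 1 := by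
  refine le_antisymm (by simpa using matRank_le_card (M := M) (A := {i})) ?_
  have := le_matRank (M := M) (A := {i}) (J := {i}) (Finset.Subset.refl _) (by simpa using h)
  simpa using this

lemma matRank_insert_coloop (hco : ∀ B, M.IsBase B → i ∈ B) (hiA : i ∉ A) :
    matRank M (insert i A) = matRank M A + 1 := by
  classical
  refine le_antisymm matRank_insert_le ?_
  obtain ⟨B, hBA, hBi, hBc⟩ := exists_matRank_basis M A
  obtain ⟨B', hB', hBB'⟩ := hBi.exists_isBase_superset
  have hiB' : i ∈ B' := hco B' hB'
  have h1 : M.Indep ↑(insert i B) := by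
    refine hB'.indep.subset ?_
    rw [Finset.coe_insert]
    exact Set.insert_subset hiB' hBB'
  have h2 : insert i B ⊆ insert i A := Finset.insert_subset_insert i hBA
  have h3 := le_matRank h2 h1
  have hiB : i ∉ B := fun hx => hiA (hBA hx)
  rw [Finset.card_insert_of_notMem hiB, hBc] at h3
  exact h3

lemma matRank_restrict {R : Set α} (hA : ↑A ⊆ R) :
    matRank (M ↾ R) A = matRank M A := by
  classical
  refine le_antisymm ?_ ?_
  · obtain ⟨B, hBA, hBi, hBc⟩ := exists_matRank_basis (M ↾ R) A
    rw [← hBc]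
    exact le_matRank hBA (Matroid.Indep.of_restrict hBi)
  · obtain ⟨B, hBA, hBi, hBc⟩ := exists_matRank_basis M A
    rw [← hBc]
    exact le_matRank hBA (hBi.indep_restrict_of_subset ((Finset.coe_subset.mpr hBA).trans hA))

lemma groundFinset_dual : groundFinset (M✶) = groundFinset M := by
  apply Finset.coe_injective
  rw [coe_groundFinset, coe_groundFinset, Matroid.dual_ground]

lemma coe_erase_ground (hiE : i ∈ M.E) :
    (↑((groundFinset M).erase i) : Set α) = M.E \ {i} := by
  rw [Finset.coe_erase, coe_groundFinset]

lemma groundFinset_mdelete (hiE : i ∈ M.E) :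
    groundFinset (mdelete M {i}) = (groundFinset M).erase i := by
  apply Finset.coe_injective
  rw [coe_groundFinset, coe_erase_ground hiE]
  rfl

lemma groundFinset_mcontract (hiE : i ∈ M.E) :
    groundFinset (mcontract M {i}) = (groundFinset M).erase i := by
  apply Finset.coe_injective
  rw [coe_groundFinset, coe_erase_ground hiE]
  rfl

lemma dual_matRank (hA : A ⊆ groundFinset M) :
    matRank (M✶) A + matRank M (groundFinset M) =
      A.card + matRank M (groundFinset M \ A) := by
  classical
  set G := groundFinset M with hG
  have hGE : (↑G : Set α) = M.E := coe_groundFinset M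
  have hAE : (↑A : Set α) ⊆ M.E := by rw [← hGE]; exact_mod_cast hA
  have hcoe : (↑(G \ A) : Set α) = M.E \ ↑A := by
    rw [Finset.coe_sdiff, hGE]
  refine le_antisymm ?_ ?_
  · -- ≤ : take a dual basis K of A
    obtain ⟨K, hKA, hKi, hKc⟩ := exists_matRank_basis (M✶) A
    obtain ⟨hKE, B', hB', hdisj⟩ := Matroid.dual_indep_iff_exists'.mp hKi
    have hB'E : B' ⊆ M.E := hB'.subset_ground
    have hI : M.Indep (B' ∩ (M.E \ ↑A)) := hB'.indep.inter_right _
    have hIle : (B' ∩ (M.E \ ↑A)).ncard ≤ matRank M (G \ A) :=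
      le_matRank' (by rw [hcoe]; exact Set.inter_subset_right) hI
    have hsplit : (B' ∩ ↑A).ncard + (B' ∩ (M.E \ ↑A)).ncard = B'.ncard := by
      have h1 : B' ∩ (M.E \ ↑A) = B' \ ↑A := by
        ext x; simp only [Set.mem_inter_iff, Set.mem_diff, Set.mem_singleton_iff]
        exact ⟨fun h => ⟨h.1, h.2.2⟩, fun h => ⟨h.1, hB'E h.1, h.2⟩⟩
      rw [h1]
      exact Set.ncard_inter_add_ncard_diff_eq_ncard B' ↑A
    have hr : B'.ncard = matRank M G := base_ncard_eq_matRank hB'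
    have hKB' : (↑K : Set α) ∩ (B' ∩ ↑A) = ∅ := by
      rw [Set.eq_empty_iff_forall_notMem]
      intro x hx
      exact hdisj.ne_of_mem hx.1 hx.2.1 rfl
    have hKsub : (↑K : Set α) ∪ (B' ∩ ↑A) ⊆ ↑A :=
      Set.union_subset (by exact_mod_cast hKA) Set.inter_subset_right
    have hcard : K.card + (B' ∩ ↑A).ncard ≤ A.card := by
      have h1 := Set.ncard_le_ncard hKsub (Set.toFinite _)
      rw [Set.ncard_union_eq (Set.disjoint_iff_inter_eq_empty.mpr hKB') (Set.toFinite _)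
        (Set.toFinite _), Set.ncard_coe_finset, Set.ncard_coe_finset] at h1
      exact h1
    omega
  · -- ≥ : build a dual independent subset of A from a basis of G \ A
    obtain ⟨J, hJsub, hJb, hJc⟩ := exists_matRank_basis' M (G \ A)
      (by rw [hcoe]; exact Set.diff_subset)
    obtain ⟨B, hB, hJB⟩ := hJb.indep.exists_isBase_superset
    have hBE : B ⊆ M.E := hB.subset_ground
    have hJeq : (↑J : Set α) = B ∩ (M.E \ ↑A) := by
      refine hJb.eq_of_subset_indep (hB.indep.inter_right _) ?_ ?_
      · exact Set.subset_inter hJB (by rw [← hcoe]; exact_mod_cast hJsub)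
      · rw [hcoe]; exact Set.inter_subset_right
    have hsplit : (B ∩ ↑A).ncard + (B ∩ (M.E \ ↑A)).ncard = B.ncard := by
      have h1 : B ∩ (M.E \ ↑A) = B \ ↑A := by
        ext x; simp only [Set.mem_inter_iff, Set.mem_diff, Set.mem_singleton_iff]
        exact ⟨fun h => ⟨h.1, h.2.2⟩, fun h => ⟨h.1, hBE h.1, h.2⟩⟩
      rw [h1]
      exact Set.ncard_inter_add_ncard_diff_eq_ncard B ↑A
    have hr : B.ncard = matRank M G := base_ncard_eq_matRank hB
    have hKi : M✶.Indep (↑A \ B) := by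
      refine (hB.compl_isBase_dual).indep.subset ?_
      intro x hx
      exact ⟨hAE hx.1, hx.2⟩
    have hKle : (↑A \ B : Set α).ncard ≤ matRank (M✶) A :=
      le_matRank' Set.diff_subset hKi
    have hAsplit : (↑A ∩ B : Set α).ncard + (↑A \ B : Set α).ncard = A.card := by
      rw [← Set.ncard_coe_finset A]
      exact Set.ncard_inter_add_ncard_diff_eq_ncard (↑A) B
    have hJn : (↑J : Set α).ncard = matRank M (G \ A) := by
      rw [Set.ncard_coe_finset, hJc]
    have hinter : (↑A ∩ B : Set α).ncard = (B ∩ ↑A).ncard := by rw [Set.inter_comm]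
    rw [hJeq] at hJn
    omega


lemma sdiff_erase_self (hiG : i ∈ A) : A \ A.erase i = {i} := by
  ext x
  simp only [Finset.mem_sdiff, Finset.mem_erase, Finset.mem_singleton]
  constructor
  · rintro ⟨h1, h2⟩
    by_contra hne
    exact h2 ⟨hne, h1⟩
  · rintro rfl
    exact ⟨hiG, fun h => h.1 rfl⟩

lemma sdiff_erase_sdiff (hiG : i ∈ B) (hA : A ⊆ B.erase i) :
    B \ (B.erase i \ A) = insert i A := by
  ext x
  simp only [Finset.mem_sdiff, Finset.mem_erase, Finset.mem_insert]
  constructor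
  · rintro ⟨h1, h2⟩
    by_cases hx : x = i
    · exact Or.inl hx
    · right
      by_contra hxA
      exact h2 ⟨⟨hx, h1⟩, hxA⟩
  · rintro (rfl | hxA)
    · exact ⟨hiG, fun h => h.1.1 rfl⟩
    · have hx := hA hxA
      rw [Finset.mem_erase] at hx
      exact ⟨hx.2, fun h => h.2 hxA⟩

lemma contract_matRank (hiE : i ∈ M.E) (hA : A ⊆ (groundFinset M).erase i) :
    matRank (mcontract M {i}) A + matRank M {i} = matRank M (insert i A) := by
  classical
  set G := groundFinset M with hG
  have hGE : (↑G : Set α) = M.E := coe_groundFinset M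
  have hiG : i ∈ G := by rw [← Finset.mem_coe, hGE]; exact hiE
  set N := M✶ ↾ (M.E \ {i}) with hN
  have hNc : mcontract M {i} = N✶ := rfl
  have hGN : groundFinset N = G.erase i := by
    apply Finset.coe_injective
    rw [coe_groundFinset, coe_erase_ground hiE]
    rfl
  have hd1 := dual_matRank (M := N) (A := A) (by rw [hGN]; exact hA)
  rw [hGN] at hd1
  have hrestr : ∀ X : Finset α, X ⊆ G.erase i → matRank N X = matRank (M✶) X := by
    intro X hX
    refine matRank_restrict ?_
    rw [← coe_erase_ground hiE]
    exact_mod_cast hX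
  rw [hrestr _ (Finset.Subset.refl _), hrestr _ Finset.sdiff_subset] at hd1
  have hd2 := dual_matRank (M := M) (A := G.erase i) (Finset.erase_subset i G)
  rw [sdiff_erase_self hiG] at hd2
  have hd3 := dual_matRank (M := M) (A := G.erase i \ A)
    (Finset.sdiff_subset.trans (Finset.erase_subset i G))
  rw [sdiff_erase_sdiff hiG hA] at hd3
  have hc1 : (G.erase i).card = G.card - 1 := Finset.card_erase_of_mem hiG
  have hc2 : (G.erase i \ A).card = (G.erase i).card - A.card := Finset.card_sdiff_of_subset hA
  have hc3 : A.card ≤ (G.erase i).card := Finset.card_le_card hA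
  have hc4 : 1 ≤ G.card := Finset.card_pos.mpr ⟨i, hiG⟩
  have hc5 : matRank (M✶) (G.erase i \ A) ≤ (G.erase i \ A).card := matRank_le_card
  have hc6 : matRank (M✶) (G.erase i) ≤ (G.erase i).card := matRank_le_card
  rw [hNc]
  omega

lemma matRank_erase_loop (h : ¬ M.Indep {i}) (hiG : i ∈ groundFinset M) :
    matRank M ((groundFinset M).erase i) = matRank M (groundFinset M) := by
  conv_rhs => rw [← Finset.insert_erase hiG]
  rw [matRank_insert_loop h]

lemma matRank_erase_coloop (hco : ∀ B, M.IsBase B → i ∈ B) (hiG : i ∈ groundFinset M) :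
    matRank M (groundFinset M) = matRank M ((groundFinset M).erase i) + 1 := by
  conv_lhs => rw [← Finset.insert_erase hiG]
  rw [matRank_insert_coloop hco (Finset.notMem_erase i _)]

lemma matRank_erase_noncoloop {B₀ : Set α} (hB₀ : M.IsBase B₀) (hiB₀ : i ∉ B₀) :
    matRank M ((groundFinset M).erase i) = matRank M (groundFinset M) := by
  classical
  refine le_antisymm (matRank_mono (Finset.erase_subset i _)) ?_
  have hfin : B₀.Finite := Set.toFinite B₀
  have h1 : hfin.toFinset ⊆ (groundFinset M).erase i := by
    intro x hx
    rw [hfin.mem_toFinset] at hx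
    rw [Finset.mem_erase]
    refine ⟨fun h => hiB₀ (h ▸ hx), ?_⟩
    rw [← Finset.mem_coe, coe_groundFinset]
    exact hB₀.subset_ground hx
  have h2 := le_matRank h1 (by rw [hfin.coe_toFinset]; exact hB₀.indep)
  rw [← Set.ncard_eq_toFinset_card B₀ hfin, base_ncard_eq_matRank hB₀] at h2
  exact h2


lemma sum_powerset_split {β : Type*} [AddCommMonoid β] (G : Finset α) (i : α)
    (hiG : i ∈ G) (f : Finset α → β) :
    ∑ A ∈ G.powerset, f A = ∑ B ∈ (G.erase i).powerset, (f B + f (insert i B)) := by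
  conv_lhs => rw [← Finset.insert_erase hiG]
  rw [Finset.sum_powerset_insert (Finset.notMem_erase i G), ← Finset.sum_add_distrib]

lemma matRank_mdelete (hiE : i ∈ M.E) (hX : A ⊆ (groundFinset M).erase i) :
    matRank (mdelete M {i}) A = matRank M A := by
  show matRank (M ↾ (M.E \ {i})) A = matRank M A
  refine matRank_restrict ?_
  rw [← coe_erase_ground hiE]
  exact_mod_cast hX

lemma gPoly_loop (hiE : i ∈ M.E) (h : ¬ M.Indep {i}) :
    gPoly M = (X 0 + X 1) * gPoly (mdelete M {i}) := by
  classical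
  have hiG : i ∈ groundFinset M := by
    rw [← Finset.mem_coe, coe_groundFinset]; exact hiE
  unfold gPoly
  rw [groundFinset_mdelete hiE]
  rw [sum_powerset_split (groundFinset M) i hiG, Finset.mul_sum]
  refine Finset.sum_congr rfl fun B hB => ?_
  rw [Finset.mem_powerset] at hB
  have hiB : i ∉ B := fun hx => Finset.notMem_erase i _ (hB hx)
  have hBG : B ⊆ groundFinset M := hB.trans (Finset.erase_subset i _)
  have h1 : matRank M B ≤ B.card := matRank_le_card
  have h2 : matRank M B ≤ matRank M (groundFinset M) := matRank_mono hBG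
  have h3 := matRank_ground_le (M := M) hB
  rw [matRank_erase_loop h hiG, Finset.card_erase_of_mem hiG] at h3
  have h4 : B.card + 1 ≤ (groundFinset M).card := by
    have := Finset.card_le_card hB
    rw [Finset.card_erase_of_mem hiG] at this
    have h5 : 1 ≤ (groundFinset M).card := Finset.card_pos.mpr ⟨i, hiG⟩
    omega
  rw [matRank_mdelete hiE hB, matRank_mdelete hiE (Finset.Subset.refl _),
    matRank_insert_loop h B, matRank_erase_loop h hiG,
    Finset.card_insert_of_notMem hiB, Finset.card_erase_of_mem hiG]
  set r := matRank M (groundFinset M) with hr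
  set k := matRank M B with hk
  set n := (groundFinset M).card with hn
  set b := B.card with hb
  rw [show (n - b) - (r - k) = (((n-1) - b) - (r - k)) + 1 from by omega,
    show (b + 1) - k = (b - k) + 1 from by omega,
    show (n - (b+1)) - (r - k) = ((n-1) - b) - (r - k) from by omega,
    pow_succ, pow_succ]
  ring


lemma gPoly_coloop (hiE : i ∈ M.E) (hco : ∀ B, M.IsBase B → i ∈ B) :
    gPoly M = (X 0 + X 1) * gPoly (mcontract M {i}) := by
  classical
  have hiG : i ∈ groundFinset M := by
    rw [← Finset.mem_coe, coe_groundFinset]; exact hiE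
  have hnl : M.Indep {i} := by
    obtain ⟨B₀, hB₀⟩ := M.exists_isBase
    exact hB₀.indep.subset (Set.singleton_subset_iff.mpr (hco B₀ hB₀))
  have hone : matRank M ({i} : Finset α) = 1 := matRank_singleton_nonloop hnl
  have hrsplit := matRank_erase_coloop hco hiG
  unfold gPoly
  rw [groundFinset_mcontract hiE]
  rw [sum_powerset_split (groundFinset M) i hiG, Finset.mul_sum]
  refine Finset.sum_congr rfl fun B hB => ?_
  rw [Finset.mem_powerset] at hB
  have hiB : i ∉ B := fun hx => Finset.notMem_erase i _ (hB hx)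
  have hBG : B ⊆ groundFinset M := hB.trans (Finset.erase_subset i _)
  have h1 : matRank M B ≤ B.card := matRank_le_card
  have h2 : matRank M B ≤ matRank M ((groundFinset M).erase i) := matRank_mono hB
  have h3 := matRank_ground_le (M := M) hB
  rw [Finset.card_erase_of_mem hiG] at h3
  have h4 : B.card + 1 ≤ (groundFinset M).card := by
    have := Finset.card_le_card hB
    rw [Finset.card_erase_of_mem hiG] at this
    have h5 : 1 ≤ (groundFinset M).card := Finset.card_pos.mpr ⟨i, hiG⟩
    omega
  have hkc : matRank (mcontract M {i}) B = matRank M B := by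
    have hc := contract_matRank hiE hB
    rw [hone, matRank_insert_coloop hco hiB] at hc
    omega
  have hrc : matRank (mcontract M {i}) ((groundFinset M).erase i) + 1 =
      matRank M (groundFinset M) := by
    have hc := contract_matRank hiE (Finset.Subset.refl _)
    rw [hone, Finset.insert_erase hiG] at hc
    omega
  rw [matRank_insert_coloop hco hiB, hkc,
    Finset.card_insert_of_notMem hiB, Finset.card_erase_of_mem hiG,
    show matRank (mcontract M {i}) ((groundFinset M).erase i) =
      matRank M (groundFinset M) - 1 from by omega]
  set r := matRank M (groundFinset M) with hr
  set k := matRank M B with hk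
  set n := (groundFinset M).card with hn
  set b := B.card with hb
  have hkr : k + 1 ≤ r := by omega
  rw [show r - k = ((r-1) - k) + 1 from by omega,
    show n - b - (r - 1 - k + 1) = (n-1) - b - ((r-1) - k) from by omega,
    show (b+1) - (k+1) = b - k from by omega,
    show r - (k+1) = (r-1) - k from by omega,
    show (n - (b+1)) - ((r-1) - k) = ((n-1) - b) - ((r-1) - k) from by omega,
    pow_succ, pow_succ]
  ring

lemma gPoly_neither (hiE : i ∈ M.E) (hnl : M.Indep {i}) {B₀ : Set α}
    (hB₀ : M.IsBase B₀) (hiB₀ : i ∉ B₀) :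
    gPoly M = (X 0 + X 3) * gPoly (mdelete M {i}) +
      (X 1 + X 2) * gPoly (mcontract M {i}) := by
  classical
  have hiG : i ∈ groundFinset M := by
    rw [← Finset.mem_coe, coe_groundFinset]; exact hiE
  have hone : matRank M ({i} : Finset α) = 1 := matRank_singleton_nonloop hnl
  have hrd := matRank_erase_noncoloop hB₀ hiB₀
  unfold gPoly
  rw [groundFinset_mcontract hiE, groundFinset_mdelete hiE]
  rw [sum_powerset_split (groundFinset M) i hiG, Finset.mul_sum, Finset.mul_sum,
    ← Finset.sum_add_distrib]
  refine Finset.sum_congr rfl fun B hB => ?_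
  rw [Finset.mem_powerset] at hB
  have hiB : i ∉ B := fun hx => Finset.notMem_erase i _ (hB hx)
  have hBG : B ⊆ groundFinset M := hB.trans (Finset.erase_subset i _)
  have h1 : matRank M B ≤ B.card := matRank_le_card
  have h2 : matRank M B ≤ matRank M (insert i B) := matRank_mono (Finset.subset_insert i B)
  have h2a : matRank M (insert i B) ≤ matRank M B + 1 := matRank_insert_le
  have h2b : 1 ≤ matRank M (insert i B) := by
    rw [← hone]
    exact matRank_mono (Finset.singleton_subset_iff.mpr (Finset.mem_insert_self i B))
  have h2c : matRank M (insert i B) ≤ matRank M (groundFinset M) := by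
    refine matRank_mono ?_
    rw [← Finset.insert_erase hiG]
    exact Finset.insert_subset_insert i hB
  have h3 := matRank_ground_le (M := M) hB
  rw [hrd, Finset.card_erase_of_mem hiG] at h3
  have h4 : B.card + 1 ≤ (groundFinset M).card := by
    have := Finset.card_le_card hB
    rw [Finset.card_erase_of_mem hiG] at this
    have h5 : 1 ≤ (groundFinset M).card := Finset.card_pos.mpr ⟨i, hiG⟩
    omega
  have hkc : matRank (mcontract M {i}) B + 1 = matRank M (insert i B) := by
    have hc := contract_matRank hiE hB
    rw [hone] at hc
    exact hc
  have hrc : matRank (mcontract M {i}) ((groundFinset M).erase i) + 1 =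
      matRank M (groundFinset M) := by
    have hc := contract_matRank hiE (Finset.Subset.refl _)
    rw [hone, Finset.insert_erase hiG] at hc
    exact hc
  rw [matRank_mdelete hiE hB, matRank_mdelete hiE (Finset.Subset.refl _), hrd,
    Finset.card_insert_of_notMem hiB, Finset.card_erase_of_mem hiG]
  set r := matRank M (groundFinset M) with hr
  set k := matRank M B with hk
  set m := matRank M (insert i B) with hm
  set c := matRank (mcontract M {i}) B with hc'
  set rc := matRank (mcontract M {i}) ((groundFinset M).erase i) with hrc'
  set n := (groundFinset M).card with hn
  set b := B.card with hb
  rw [show (n - b) - (r - k) = (((n-1) - b) - (r - k)) + 1 from by omega,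
    show r - m = rc - c from by omega,
    show m = c + 1 from by omega,
    show (b+1) - (c+1) = b - c from by omega,
    show (n - (b+1)) - (rc - c) = ((n-1) - b) - (rc - c) from by omega,
    pow_succ, pow_succ]
  ring


lemma matRank_empty (M : Matroid α) [Fintype α] : matRank M (∅ : Finset α) = 0 :=
  Nat.le_zero.mp (by simpa using matRank_le_card (M := M) (A := ∅))

lemma gPoly_single (h : M.E.ncard = 1) : gPoly M = X 0 + X 1 := by
  classical
  obtain ⟨i, hi⟩ := Set.ncard_eq_one.mp h
  have hG : groundFinset M = {i} := by
    apply Finset.coe_injective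
    rw [coe_groundFinset, hi, Finset.coe_singleton]
  unfold gPoly
  have hp : ({i} : Finset α).powerset = {∅, {i}} := by
    ext A
    simp [Finset.subset_singleton_iff]
  rw [hG, hp, Finset.sum_pair (Ne.symm (Finset.singleton_ne_empty i))]
  rw [matRank_empty]
  have h1 : matRank M ({i} : Finset α) ≤ 1 := by
    simpa using matRank_le_card (M := M) (A := {i})
  interval_cases h2 : matRank M ({i} : Finset α) <;> simp <;> ring
end DelCon




/-- Deletion–contraction for `t_M` (the quotient of `g_M` by `x + y`): if `|E| = 1` then
`t_M = 1`; if `|E| ≥ 2` and `i ∈ E`, then `t_M = (x+y)·t_{M∖i}` if `i` is a loop,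
`t_M = (x+y)·t_{M/i}` if `i` is a coloop, and `t_M = (x+w)·t_{M∖i} + (y+z)·t_{M/i}`
if `i` is neither a loop nor a coloop. -/
theorem stmt1 [Fintype α] (M : Matroid α)
    (t : MvPolynomial (Fin 4) ℤ) (ht : (X 0 + X 1) * t = gPoly M) :
    (M.E.ncard = 1 → t = 1) ∧
    (2 ≤ M.E.ncard → ∀ i ∈ M.E,
      ∀ td tc : MvPolynomial (Fin 4) ℤ,
        (X 0 + X 1) * td = gPoly (mdelete M {i}) →
        (X 0 + X 1) * tc = gPoly (mcontract M {i}) →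
        ((∀ B, M.IsBase B → i ∉ B) → t = (X 0 + X 1) * td) ∧
        ((∀ B, M.IsBase B → i ∈ B) → t = (X 0 + X 1) * tc) ∧
        ((¬ ∀ B, M.IsBase B → i ∉ B) → (¬ ∀ B, M.IsBase B → i ∈ B) →
          t = (X 0 + X 3) * td + (X 1 + X 2) * tc)) := by
  have hne : (X 0 + X 1 : MvPolynomial (Fin 4) ℤ) ≠ 0 := by
    intro h
    have h2 := congrArg (eval (fun _ => (1 : ℤ))) h
    simp at h2
  constructor
  · intro h1
    refine mul_left_cancel₀ hne ?_
    rw [ht, gPoly_single h1, mul_one]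
  · intro _ i hiE td tc htd htc
    refine ⟨?_, ?_, ?_⟩
    · intro hloop
      have hnl : ¬ M.Indep {i} := by
        intro hind
        obtain ⟨B', hB', hsub⟩ := hind.exists_isBase_superset
        exact hloop B' hB' (hsub rfl)
      refine mul_left_cancel₀ hne ?_
      rw [ht, gPoly_loop hiE hnl, ← htd]
    · intro hco
      refine mul_left_cancel₀ hne ?_
      rw [ht, gPoly_coloop hiE hco, ← htc]
    · intro hl hc
      push_neg at hl hc
      obtain ⟨B₁, hB₁, hiB₁⟩ := hl
      obtain ⟨B₀, hB₀, hiB₀⟩ := hc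
      have hnl : M.Indep {i} := hB₁.indep.subset (Set.singleton_subset_iff.mpr hiB₁)
      refine mul_left_cancel₀ hne ?_
      rw [ht, gPoly_neither hiE hnl hB₀ hiB₀, ← htd, ← htc]
      ring
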